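/- Let ψ : ℝ → ℂ be a measurable function satisfying |ψ(x)| ≤ A (1+|x|)^{-20} for all x. Fix an interval ω ⊂ ℝ, and let T({ω}) be the set of tiles s = I_s × ω with I_s dyadic and 1 ≤ |I_s|·|ω| < 2, and set ψ_s(x) = |I_s|^{-1/2} ψ((x − c(I_s))/|I_s|) e^{i c(ω) x}. Then there is a constant C depending only on A such that Σ_{s∈T({ω})} |⟨f, ψ_s⟩|² ≤ C ‖f‖_{L²(ℝ)}² for all f ∈ L²(ℝ). -/

import Mathlib

open MeasureTheory Complex
open scoped ENNReal NNReal

/-- The dyadic interval `[n 2^k, (n+1) 2^k)`. -/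
noncomputable def dyI (k n : ℤ) : Set ℝ :=
  Set.Ico ((n : ℝ) * 2 ^ k) (((n : ℝ) + 1) * 2 ^ k)

/-- The center of the dyadic interval `[n 2^k, (n+1) 2^k)`. -/
noncomputable def dyCen (k n : ℤ) : ℝ := ((n : ℝ) + 1/2) * 2 ^ k

/-- The tile function `ψ_s(x) = |I_s|^{-1/2} ψ((x − c(I_s))/|I_s|) e^{i c(ω) x}`
for the tile `s = I_s × ω` with `I_s = [n 2^k, (n+1) 2^k)` and `c = c(ω)`. -/
noncomputable def tileFn (ψ : ℝ → ℂ) (k n : ℤ) (c : ℝ) (x : ℝ) : ℂ :=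
  ((Real.sqrt ((2:ℝ) ^ k))⁻¹ : ℝ) * ψ ((x - dyCen k n) / (2:ℝ) ^ k) *
    Complex.exp (Complex.I * (c : ℂ) * (x : ℂ))

/-- The inner product `⟨f, ψ_s⟩ = ∫ f \overline{ψ_s}`. -/
noncomputable def tileInner (ψ : ℝ → ℂ) (k n : ℤ) (c : ℝ) (f : ℝ → ℂ) : ℂ :=
  ∫ x : ℝ, f x * (starRingEnd ℂ) (tileFn ψ k n c x)


/-- bound for `∫ (1+|y|)^{-20}`. -/
noncomputable def Jc : ℝ := ∫ y : ℝ, ((1 + |y|) ^ (20 : ℕ))⁻¹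

/-- bound for `∑_{n∈ℤ} (1+|t-n-1/2|)^{-20}`. -/
noncomputable def Sc : ℝ := 2 * ∑' j : ℕ, (((j : ℝ) + 1) ^ 2)⁻¹

lemma Jc_nonneg : 0 ≤ Jc := integral_nonneg fun y => by positivity

lemma summable_aux : Summable fun j : ℕ => (((j : ℝ) + 1) ^ 2)⁻¹ := by
  have h := (summable_nat_add_iff 1).2 (Real.summable_nat_pow_inv.2 one_lt_two)
  refine h.congr fun j => ?_
  push_cast
  ring_nf

lemma Sc_nonneg : 0 ≤ Sc := by
  have : 0 ≤ ∑' j : ℕ, (((j : ℝ) + 1) ^ 2)⁻¹ := tsum_nonneg fun j => by positivity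
  unfold Sc; linarith

lemma integrable_decay : Integrable (fun y : ℝ => ((1 + |y|) ^ (20 : ℕ))⁻¹) := by
  have h := integrable_one_add_norm (E := ℝ) (μ := volume) (r := 20) (by norm_num)
  refine h.congr (Filter.Eventually.of_forall fun y => ?_)
  simp only [Real.norm_eq_abs]
  rw [Real.rpow_neg (by positivity), ← Real.rpow_natCast (1 + |y|) 20]
  norm_num

lemma decay_sum (t : ℝ) :
    ∑' n : ℤ, ENNReal.ofReal (((1 + |t - ((n : ℝ) + 1/2)|) ^ (20 : ℕ))⁻¹)
      ≤ ENNReal.ofReal Sc := by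
  set s : ℝ := t - 1/2 with hs
  set m : ℤ := ⌊s⌋ with hm
  have hms : (m : ℝ) ≤ s := Int.floor_le s
  have hsm : s < (m : ℝ) + 1 := Int.lt_floor_add_one s
  -- termwise bound by the inverse square
  have hterm : ∀ n : ℤ, ENNReal.ofReal (((1 + |t - ((n : ℝ) + 1/2)|) ^ (20 : ℕ))⁻¹)
      ≤ ENNReal.ofReal (((1 + |s - (n : ℝ)|) ^ 2)⁻¹) := by
    intro n
    apply ENNReal.ofReal_le_ofReal
    have he : t - ((n : ℝ) + 1/2) = s - n := by rw [hs]; ring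
    rw [he]
    have h1 : (1 : ℝ) ≤ 1 + |s - (n:ℝ)| := by
      have := abs_nonneg (s - (n:ℝ)); linarith
    have h2 : (1 + |s - (n:ℝ)|) ^ 2 ≤ (1 + |s - (n:ℝ)|) ^ (20 : ℕ) :=
      pow_le_pow_right₀ h1 (by norm_num)
    exact inv_anti₀ (by positivity) h2
  refine le_trans (ENNReal.tsum_le_tsum hterm) ?_
  set a : ℤ → ℝ≥0∞ := fun n => ENNReal.ofReal (((1 + |s - (n : ℝ)|) ^ 2)⁻¹) with ha
  have hshift : ∑' n : ℤ, a n = ∑' n : ℤ, a (n + (m + 1)) :=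
    ((Equiv.addRight (m + 1)).tsum_eq a).symm
  rw [hshift]
  have hsplit : ∑' n : ℤ, a (n + (m + 1))
      = (∑' j : ℕ, a ((j : ℤ) + (m + 1))) + ∑' j : ℕ, a ((-(j + 1) : ℤ) + (m + 1)) := by
    exact tsum_of_nat_of_neg_add_one ENNReal.summable ENNReal.summable
  rw [hsplit]
  have hb1 : ∀ j : ℕ, a ((j : ℤ) + (m + 1)) ≤ ENNReal.ofReal ((((j : ℝ) + 1) ^ 2)⁻¹) := by
    intro j
    apply ENNReal.ofReal_le_ofReal
    have : (j : ℝ) ≤ |s - (((j : ℤ) + (m + 1) : ℤ) : ℝ)| := by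
      push_cast
      rw [abs_sub_comm, _root_.abs_of_nonneg (by linarith : (0:ℝ) ≤ (j:ℝ) + ((m:ℝ)+1) - s)]
      linarith
    have h2 : ((j : ℝ) + 1) ^ 2 ≤ (1 + |s - (((j : ℤ) + (m + 1) : ℤ) : ℝ)|) ^ 2 := by
      apply pow_le_pow_left₀ (by positivity)
      linarith
    exact inv_anti₀ (by positivity) h2
  have hb2 : ∀ j : ℕ, a ((-(j + 1) : ℤ) + (m + 1)) ≤ ENNReal.ofReal ((((j : ℝ) + 1) ^ 2)⁻¹) := by
    intro j
    apply ENNReal.ofReal_le_ofReal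
    have : (j : ℝ) ≤ |s - (((-(j + 1) : ℤ) + (m + 1) : ℤ) : ℝ)| := by
      push_cast
      rw [_root_.abs_of_nonneg (by linarith : (0:ℝ) ≤ s - (-((j:ℝ) + 1) + ((m:ℝ)+1)))]
      linarith
    have h2 : ((j : ℝ) + 1) ^ 2 ≤ (1 + |s - (((-(j + 1) : ℤ) + (m + 1) : ℤ) : ℝ)|) ^ 2 := by
      apply pow_le_pow_left₀ (by positivity)
      linarith
    exact inv_anti₀ (by positivity) h2
  have hK : ∑' j : ℕ, ENNReal.ofReal ((((j : ℝ) + 1) ^ 2)⁻¹)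
      = ENNReal.ofReal (∑' j : ℕ, (((j : ℝ) + 1) ^ 2)⁻¹) :=
    (ENNReal.ofReal_tsum_of_nonneg (fun j => by positivity) summable_aux).symm
  calc (∑' j : ℕ, a ((j : ℤ) + (m + 1))) + ∑' j : ℕ, a ((-(j + 1) : ℤ) + (m + 1))
      ≤ (∑' j : ℕ, ENNReal.ofReal ((((j : ℝ) + 1) ^ 2)⁻¹))
        + ∑' j : ℕ, ENNReal.ofReal ((((j : ℝ) + 1) ^ 2)⁻¹) :=
        add_le_add (ENNReal.tsum_le_tsum hb1) (ENNReal.tsum_le_tsum hb2)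
    _ = ENNReal.ofReal Sc := by
        have hpos : 0 ≤ ∑' j : ℕ, (((j : ℝ) + 1) ^ 2)⁻¹ := tsum_nonneg fun j => by positivity
        rw [hK, ← ENNReal.ofReal_add hpos hpos]
        unfold Sc
        congr 1
        ring

theorem ofReal_norm_eq_coe_nnnorm {E : Type*} [SeminormedAddGroup E] (a : E) :
    ENNReal.ofReal ‖a‖ = (‖a‖₊ : ℝ≥0∞) := ENNReal.ofReal_eq_coe_nnreal _

lemma lint_comp (g : ℝ → ℝ≥0∞) (hg : Measurable g) {b : ℝ} (hb : 0 < b) (a : ℝ) :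
    ∫⁻ x : ℝ, g ((x - a) / b) = ENNReal.ofReal b * ∫⁻ y : ℝ, g y := by
  have hb' : b⁻¹ ≠ 0 := inv_ne_zero hb.ne'
  have hmap1 : Measure.map (fun x : ℝ => b⁻¹ * x) volume = ENNReal.ofReal b • volume := by
    rw [Real.map_volume_mul_left hb', inv_inv, abs_of_pos hb]
  have hmap2 : Measure.map (fun x : ℝ => x + -(a / b)) volume = volume :=
    (measurePreserving_add_right volume _).map_eq
  have hcomp : (fun x : ℝ => (x - a) / b)
      = (fun x : ℝ => x + -(a / b)) ∘ (fun x : ℝ => b⁻¹ * x) := by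
    funext x
    simp only [Function.comp_apply]
    field_simp
    ring
  have hm1 : Measurable fun x : ℝ => b⁻¹ * x := measurable_const_mul _
  have hm2 : Measurable fun x : ℝ => x + -(a / b) := measurable_add_const _
  have hmap : Measure.map (fun x : ℝ => (x - a) / b) volume = ENNReal.ofReal b • volume := by
    rw [hcomp, ← Measure.map_map hm2 hm1, hmap1, Measure.map_smul, hmap2]
  calc ∫⁻ x : ℝ, g ((x - a) / b)
      = ∫⁻ y : ℝ, g y ∂(Measure.map (fun x : ℝ => (x - a) / b) volume) :=
        (lintegral_map hg ((measurable_id.sub_const a).div_const b)).symm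
    _ = ENNReal.ofReal b * ∫⁻ y : ℝ, g y := by rw [hmap, lintegral_smul_measure, smul_eq_mul]

lemma cs_lemma {F w : ℝ → ℝ≥0∞} (hF : AEMeasurable F volume) (hw : AEMeasurable w volume) :
    (∫⁻ x : ℝ, F x * w x) ^ 2 ≤ (∫⁻ x : ℝ, F x ^ 2 * w x) * ∫⁻ x : ℝ, w x := by
  have hsq : ∀ x : ℝ≥0∞, x ^ ((1:ℝ)/2) * x ^ ((1:ℝ)/2) = x := by
    intro x
    rw [← ENNReal.rpow_add_of_nonneg _ _ (by norm_num) (by norm_num)]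
    norm_num
  have hpq : Real.HolderConjugate 2 2 := Real.HolderConjugate.two_two
  have hf' : AEMeasurable (fun x => F x * w x ^ ((1:ℝ)/2)) volume :=
    hF.mul (hw.pow_const _)
  have hg' : AEMeasurable (fun x => w x ^ ((1:ℝ)/2)) volume := hw.pow_const _
  have h := ENNReal.lintegral_mul_le_Lp_mul_Lq volume hpq hf' hg'
  have heq1 : ∀ x : ℝ, (fun x => F x * w x ^ ((1:ℝ)/2)) x * (fun x => w x ^ ((1:ℝ)/2)) x
      = F x * w x := by
    intro x; simp only []
    rw [mul_assoc, hsq]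
  have heq2 : ∀ x : ℝ, (fun x => F x * w x ^ ((1:ℝ)/2)) x ^ (2:ℝ) = F x ^ 2 * w x := by
    intro x; simp only []
    rw [ENNReal.mul_rpow_of_nonneg _ _ (by norm_num : (0:ℝ) ≤ 2), ← ENNReal.rpow_natCast (F x) 2,
      ← ENNReal.rpow_mul]
    norm_num
  have heq3 : ∀ x : ℝ, (fun x => w x ^ ((1:ℝ)/2)) x ^ (2:ℝ) = w x := by
    intro x; simp only []
    rw [← ENNReal.rpow_mul]
    norm_num
  rw [show (fun a => ((fun x => F x * w x ^ ((1:ℝ)/2)) * fun x => w x ^ ((1:ℝ)/2)) a)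
      = fun x : ℝ => F x * w x from funext fun x => heq1 x] at h
  simp_rw [heq2, heq3] at h
  have h2 : (∫⁻ x : ℝ, F x * w x) ^ 2
      ≤ ((∫⁻ x : ℝ, F x ^ 2 * w x) ^ ((1:ℝ)/2) * (∫⁻ x : ℝ, w x) ^ ((1:ℝ)/2)) ^ 2 := by
    rw [sq, sq]; exact mul_le_mul' h h
  refine h2.trans_eq ?_
  rw [sq, mul_mul_mul_comm, hsq, hsq]

lemma key_lemma (A : ℝ) (ψ : ℝ → ℂ) (hψ : Measurable ψ)
    (hA : ∀ x : ℝ, ‖ψ x‖ ≤ A * ((1 + |x|) ^ (20 : ℕ))⁻¹) (c : ℝ) (k : ℤ)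
    (f : ℝ → ℂ) (hf : AEMeasurable f volume) :
    ∑' n : ℤ, (‖tileInner ψ k n c f‖₊ : ℝ≥0∞) ^ 2
      ≤ ENNReal.ofReal (A * Jc) * ENNReal.ofReal (A * Sc)
          * ∫⁻ x : ℝ, (‖f x‖₊ : ℝ≥0∞) ^ 2 := by
  have hA0 : 0 ≤ A := le_trans (norm_nonneg (ψ 0)) (by simpa using hA 0)
  set b : ℝ := (2:ℝ) ^ k with hbdef
  have hb : 0 < b := zpow_pos (by norm_num) k
  set r : ℝ := (Real.sqrt b)⁻¹ with hrdef
  have hr : 0 ≤ r := inv_nonneg.2 (Real.sqrt_nonneg b)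
  set F : ℝ → ℝ≥0∞ := fun x => (‖f x‖₊ : ℝ≥0∞) with hFdef
  set W : ℤ → ℝ → ℝ≥0∞ := fun n x => (‖ψ ((x - dyCen k n) / b)‖₊ : ℝ≥0∞) with hWdef
  have hWm : ∀ n, Measurable (W n) := fun n =>
    (hψ.comp ((measurable_id.sub_const _).div_const _)).enorm
  have hFae : AEMeasurable F volume := hf.enorm
  -- norm of the tile function
  have hTF : ∀ (n : ℤ) (x : ℝ), (‖tileFn ψ k n c x‖₊ : ℝ≥0∞) = ENNReal.ofReal r * W n x := by
    intro n x
    have hexp : ‖Complex.exp (Complex.I * (c : ℂ) * (x : ℂ))‖ = 1 := by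
      rw [Complex.norm_exp]
      simp
    have hnorm : ‖tileFn ψ k n c x‖ = r * ‖ψ ((x - dyCen k n) / b)‖ := by
      unfold tileFn
      rw [norm_mul, norm_mul, hexp, mul_one, Complex.norm_real, Real.norm_eq_abs,
        ← hbdef, _root_.abs_of_nonneg hr]
    rw [← ofReal_norm_eq_coe_nnnorm, hnorm, ENNReal.ofReal_mul hr, hWdef]
    simp only [ofReal_norm_eq_coe_nnnorm]
  -- the basic pointwise bound on the inner product
  have hinner : ∀ n : ℤ, (‖tileInner ψ k n c f‖₊ : ℝ≥0∞)
      ≤ ∫⁻ x : ℝ, F x * (ENNReal.ofReal r * W n x) := by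
    intro n
    refine le_trans (enorm_integral_le_lintegral_enorm _) (lintegral_mono fun x => ?_)
    rw [enorm_eq_nnnorm, nnnorm_mul, ENNReal.coe_mul, RCLike.nnnorm_conj, hTF n x]
  -- integral of ψ bound
  have hψint : ∫⁻ y : ℝ, (‖ψ y‖₊ : ℝ≥0∞) ≤ ENNReal.ofReal (A * Jc) := by
    have h1 : ∫⁻ y : ℝ, (‖ψ y‖₊ : ℝ≥0∞)
        ≤ ∫⁻ y : ℝ, ENNReal.ofReal (A * ((1 + |y|) ^ (20 : ℕ))⁻¹) := by
      refine lintegral_mono fun y => ?_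
      rw [← ofReal_norm_eq_coe_nnnorm]
      exact ENNReal.ofReal_le_ofReal (hA y)
    refine h1.trans ?_
    rw [← ofReal_integral_eq_lintegral_ofReal (integrable_decay.const_mul A)
        (Filter.Eventually.of_forall fun y => mul_nonneg hA0 (by positivity))]
    apply ENNReal.ofReal_le_ofReal
    rw [MeasureTheory.integral_const_mul]
    unfold Jc
    exact le_refl _
  -- integral of each weight
  have hWint : ∀ n : ℤ, ∫⁻ x : ℝ, ENNReal.ofReal r * W n x
      ≤ ENNReal.ofReal r * (ENNReal.ofReal b * ENNReal.ofReal (A * Jc)) := by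
    intro n
    rw [lintegral_const_mul _ (hWm n)]
    refine mul_le_mul' le_rfl ?_
    have hcomp := lint_comp (fun y => (‖ψ y‖₊ : ℝ≥0∞)) hψ.enorm hb (dyCen k n)
    rw [hWdef]
    simp only []
    rw [hcomp]
    exact mul_le_mul' le_rfl hψint
  -- pointwise sum of the weights
  have hsumW : ∀ x : ℝ, ∑' n : ℤ, W n x ≤ ENNReal.ofReal (A * Sc) := by
    intro x
    have h1 : ∀ n : ℤ, W n x ≤ ENNReal.ofReal A
        * ENNReal.ofReal (((1 + |x / b - ((n : ℝ) + 1/2)|) ^ (20 : ℕ))⁻¹) := by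
      intro n
      rw [hWdef]
      simp only []
      rw [← ofReal_norm_eq_coe_nnnorm, ← ENNReal.ofReal_mul hA0]
      apply ENNReal.ofReal_le_ofReal
      have harg : (x - dyCen k n) / b = x / b - ((n : ℝ) + 1/2) := by
        unfold dyCen
        rw [← hbdef]
        field_simp
      rw [harg]
      exact hA _
    calc ∑' n : ℤ, W n x
        ≤ ∑' n : ℤ, ENNReal.ofReal A
            * ENNReal.ofReal (((1 + |x / b - ((n : ℝ) + 1/2)|) ^ (20 : ℕ))⁻¹) :=
          ENNReal.tsum_le_tsum h1
      _ = ENNReal.ofReal A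
            * ∑' n : ℤ, ENNReal.ofReal (((1 + |x / b - ((n : ℝ) + 1/2)|) ^ (20 : ℕ))⁻¹) :=
          ENNReal.tsum_mul_left
      _ ≤ ENNReal.ofReal A * ENNReal.ofReal Sc := mul_le_mul' le_rfl (decay_sum (x / b))
      _ = ENNReal.ofReal (A * Sc) := (ENNReal.ofReal_mul hA0).symm
  -- measurability for the sum interchange
  have hmeas : ∀ n : ℤ, AEMeasurable (fun x => F x ^ 2 * (ENNReal.ofReal r * W n x)) volume :=
    fun n => (hFae.pow_const 2).mul ((measurable_const.mul (hWm n)).aemeasurable)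
  -- main chain
  have hrrb : r * r * b = 1 := by
    rw [hrdef, ← mul_inv]
    rw [Real.mul_self_sqrt hb.le]
    exact inv_mul_cancel₀ hb.ne'
  calc ∑' n : ℤ, (‖tileInner ψ k n c f‖₊ : ℝ≥0∞) ^ 2
      ≤ ∑' n : ℤ, (∫⁻ x : ℝ, F x ^ 2 * (ENNReal.ofReal r * W n x))
          * ∫⁻ x : ℝ, ENNReal.ofReal r * W n x := by
        refine ENNReal.tsum_le_tsum fun n => ?_
        refine le_trans ?_ (cs_lemma hFae ((measurable_const.mul (hWm n)).aemeasurable))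
        rw [sq, sq]
        exact mul_le_mul' (hinner n) (hinner n)
    _ ≤ ∑' n : ℤ, (∫⁻ x : ℝ, F x ^ 2 * (ENNReal.ofReal r * W n x))
          * (ENNReal.ofReal r * (ENNReal.ofReal b * ENNReal.ofReal (A * Jc))) :=
        ENNReal.tsum_le_tsum fun n => mul_le_mul' le_rfl (hWint n)
    _ = (∑' n : ℤ, ∫⁻ x : ℝ, F x ^ 2 * (ENNReal.ofReal r * W n x))
          * (ENNReal.ofReal r * (ENNReal.ofReal b * ENNReal.ofReal (A * Jc))) :=
        ENNReal.tsum_mul_right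
    _ = (∫⁻ x : ℝ, ∑' n : ℤ, F x ^ 2 * (ENNReal.ofReal r * W n x))
          * (ENNReal.ofReal r * (ENNReal.ofReal b * ENNReal.ofReal (A * Jc))) := by
        rw [lintegral_tsum hmeas]
    _ ≤ (∫⁻ x : ℝ, F x ^ 2 * (ENNReal.ofReal r * ENNReal.ofReal (A * Sc)))
          * (ENNReal.ofReal r * (ENNReal.ofReal b * ENNReal.ofReal (A * Jc))) := by
        refine mul_le_mul' (lintegral_mono fun x => ?_) le_rfl
        rw [ENNReal.tsum_mul_left, ENNReal.tsum_mul_left]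
        exact mul_le_mul' le_rfl (mul_le_mul' le_rfl (hsumW x))
    _ = (∫⁻ x : ℝ, F x ^ 2) * (ENNReal.ofReal r * ENNReal.ofReal (A * Sc))
          * (ENNReal.ofReal r * (ENNReal.ofReal b * ENNReal.ofReal (A * Jc))) := by
        rw [lintegral_mul_const'' _ (hFae.pow_const 2)]
    _ = (ENNReal.ofReal r * ENNReal.ofReal r * ENNReal.ofReal b)
          * (ENNReal.ofReal (A * Jc) * ENNReal.ofReal (A * Sc) * ∫⁻ x : ℝ, F x ^ 2) := by
        ring
    _ = ENNReal.ofReal (A * Jc) * ENNReal.ofReal (A * Sc) * ∫⁻ x : ℝ, F x ^ 2 := by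
        rw [← ENNReal.ofReal_mul hr, ← ENNReal.ofReal_mul (mul_nonneg hr hr), hrrb,
          ENNReal.ofReal_one, one_mul]
/-- **The basic `L²` estimate for a single frequency interval.**  If
`|ψ(x)| ≤ A (1+|x|)^{-20}` then, for any interval `ω = (u,v)`, summing over all tiles
`s = I_s × ω` (i.e. `I_s = [n2^k, (n+1)2^k)` dyadic with `1 ≤ |I_s| |ω| < 2`),
`∑_{s ∈ T({ω})} |⟨f, ψ_s⟩|² ≤ C ‖f‖₂²`, where `C` depends only on `A`. -/
theorem tile_L2_bound_single_frequency (A : ℝ) :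
    ∃ C : ℝ, 0 < C ∧
      ∀ ψ : ℝ → ℂ, Measurable ψ →
        (∀ x : ℝ, ‖ψ x‖ ≤ A * ((1 + |x|) ^ (20 : ℕ))⁻¹) →
        ∀ u v : ℝ, u < v →
        ∀ f : ℝ → ℂ, MemLp f 2 volume →
          (∑' s : ℤ × ℤ,
            if 1 ≤ (2:ℝ) ^ s.1 * (v - u) ∧ (2:ℝ) ^ s.1 * (v - u) < 2
            then (‖tileInner ψ s.1 s.2 ((u + v) / 2) f‖₊ : ℝ≥0∞) ^ 2
            else 0)
            ≤ ENNReal.ofReal C * ∫⁻ x : ℝ, (‖f x‖₊ : ℝ≥0∞) ^ 2 := by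
  refine ⟨A ^ 2 * Jc * Sc + 1, ?_, ?_⟩
  · have h1 : 0 ≤ A ^ 2 * Jc * Sc :=
      mul_nonneg (mul_nonneg (sq_nonneg A) Jc_nonneg) Sc_nonneg
    linarith
  intro ψ hψ hA u v huv f hf
  have hA0 : 0 ≤ A := le_trans (norm_nonneg (ψ 0)) (by simpa using hA 0)
  set d : ℝ := v - u with hd
  have hd0 : 0 < d := sub_pos.2 huv
  have hconst : ENNReal.ofReal (A * Jc) * ENNReal.ofReal (A * Sc)
      ≤ ENNReal.ofReal (A ^ 2 * Jc * Sc + 1) := by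
    rw [← ENNReal.ofReal_mul (mul_nonneg hA0 Jc_nonneg)]
    apply ENNReal.ofReal_le_ofReal
    nlinarith [sq_nonneg A, Jc_nonneg, Sc_nonneg]
  rw [ENNReal.tsum_prod']
  by_cases hex : ∃ k : ℤ, 1 ≤ (2:ℝ) ^ k * d ∧ (2:ℝ) ^ k * d < 2
  · obtain ⟨k₀, hk₀⟩ := hex
    have huniq : ∀ k : ℤ, (1 ≤ (2:ℝ) ^ k * d ∧ (2:ℝ) ^ k * d < 2) → k = k₀ := by
      intro k hk
      have hle : ∀ a b : ℤ, (1 ≤ (2:ℝ) ^ a * d ∧ (2:ℝ) ^ a * d < 2) →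
          (1 ≤ (2:ℝ) ^ b * d ∧ (2:ℝ) ^ b * d < 2) → a ≤ b := by
        intro a b ha hb
        have h2 : (2:ℝ) ^ a < (2:ℝ) ^ (b + 1) := by
          rw [zpow_add_one₀ (by norm_num : (2:ℝ) ≠ 0)]
          nlinarith [ha.2, hb.1, zpow_pos (by norm_num : (0:ℝ) < 2) a,
            zpow_pos (by norm_num : (0:ℝ) < 2) b]
        have := (zpow_lt_zpow_iff_right₀ (by norm_num : (1:ℝ) < 2)).1 h2
        omega
      exact le_antisymm (hle k k₀ hk hk₀) (hle k₀ k hk₀ hk)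
    rw [tsum_eq_single k₀ (fun k hk => ?_)]
    · simp only [if_pos hk₀]
      refine le_trans (key_lemma A ψ hψ hA ((u + v) / 2) k₀ f
        hf.aestronglyMeasurable.aemeasurable) ?_
      exact mul_le_mul' hconst le_rfl
    · have : ¬(1 ≤ (2:ℝ) ^ k * d ∧ (2:ℝ) ^ k * d < 2) := fun h => hk (huniq k h)
      simp only [if_neg this, tsum_zero]
  · push_neg at hex
    have : ∀ k : ℤ, (∑' n : ℤ, if 1 ≤ (2:ℝ) ^ k * d ∧ (2:ℝ) ^ k * d < 2
        then (‖tileInner ψ k n ((u + v) / 2) f‖₊ : ℝ≥0∞) ^ 2 else 0) = 0 := by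
      intro k
      have hnot : ¬(1 ≤ (2:ℝ) ^ k * d ∧ (2:ℝ) ^ k * d < 2) := by
        intro h
        exact absurd h.2 (not_lt.2 (hex k h.1))
      simp only [if_neg hnot, tsum_zero]
    simp only [this, tsum_zero]
    exact zero_le
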